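/- Let z₀ ∈ ℂ with |z₀| = 1, and let x, y ∈ ℂ with Im(x) > 0, Im(y) > 0 and x ≠ y. Then as t → 0⁺ (t real, t > 0), the limit of i·t·z₀·e^{itx}·A(z₀·e^{itx}, z₀·e^{ity}) exists and equals 1/(x−y) + 1/(x − conj(y)). (This is the dx-coefficient statement of the property that the pullback of the propagator under the maps φ_t(x) = z₀e^{itx} converges, as t → 0, to the Kontsevich propagator ω_K(x,y) = (2π)^{-1}(d arg(x−y) − d arg(conj(x)−y)) on the upper half-plane; the factor 1/(4πi) common to both sides has been dropped.) -/

import Mathlib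

open Complex Filter

/-- `A z w` is `4πi` times the coefficient of `dz` in the propagator 1-form `ω(z,w)`. -/
noncomputable def propA (z w : ℂ) : ℂ :=
  (z - w)⁻¹ - (starRingEnd ℂ) w / (1 - z * (starRingEnd ℂ) w) - (starRingEnd ℂ) z

lemma auxDeriv (a : ℂ) :
    HasDerivAt (fun t : ℝ => Complex.exp (Complex.I * t * a)) (Complex.I * a) 0 := by
  have h1 : HasDerivAt (fun z : ℂ => Complex.exp (Complex.I * z * a)) (Complex.I * a) 0 := by
    have hlin : HasDerivAt (fun z : ℂ => Complex.I * z * a) (Complex.I * a) 0 := by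
      simpa using ((hasDerivAt_id (0 : ℂ)).const_mul Complex.I).mul_const a
    have := (Complex.hasDerivAt_exp (Complex.I * (0 : ℂ) * a)).comp 0 hlin
    simpa [Function.comp_def] using this
  exact h1.comp_ofReal

lemma auxSlope {f : ℝ → ℂ} {a : ℂ} (hf : HasDerivAt f a 0) (h0 : f 0 = 0) (ha : a ≠ 0) :
    Tendsto (fun t : ℝ => (t : ℂ) / f t) (nhdsWithin 0 (Set.Ioi 0)) (nhds a⁻¹) ∧
      ∀ᶠ t in nhdsWithin (0:ℝ) (Set.Ioi 0), f t ≠ 0 := by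
  have hs : Tendsto (fun t : ℝ => f t / (t : ℂ)) (nhdsWithin 0 {(0:ℝ)}ᶜ) (nhds a) := by
    have := hasDerivAt_iff_tendsto_slope.mp hf
    refine this.congr (fun t => ?_)
    simp [slope, Complex.real_smul, div_eq_inv_mul, h0]
  have hs' : Tendsto (fun t : ℝ => f t / (t : ℂ)) (nhdsWithin 0 (Set.Ioi 0)) (nhds a) :=
    hs.mono_left (nhdsWithin_mono _ (fun t ht => ne_of_gt ht))
  have hne : ∀ᶠ t in nhdsWithin (0:ℝ) (Set.Ioi 0), f t / (t : ℂ) ≠ 0 :=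
    hs'.eventually_ne ha
  constructor
  · refine (hs'.inv₀ ha).congr (fun t => ?_)
    rw [inv_div]
  · filter_upwards [hne] with t ht
    intro h; exact ht (by simp [h])

/-- As `t → 0⁺`, the pullback of the propagator under `φ_t(x) = z₀ e^{itx}` converges to the
Kontsevich propagator on the upper half-plane: `dx`-coefficient statement. -/
theorem propagator_limit_kontsevich_dx (z₀ x y : ℂ) (hz₀ : ‖z₀‖ = 1)
    (hx : 0 < x.im) (hy : 0 < y.im) (hxy : x ≠ y) :
    Tendsto
      (fun t : ℝ =>
        Complex.I * (t : ℂ) * z₀ * Complex.exp (Complex.I * (t : ℂ) * x) *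
          propA (z₀ * Complex.exp (Complex.I * (t : ℂ) * x))
            (z₀ * Complex.exp (Complex.I * (t : ℂ) * y)))
      (nhdsWithin 0 (Set.Ioi 0))
      (nhds (1 / (x - y) + 1 / (x - (starRingEnd ℂ) y))) := by
  have hz0 : z₀ ≠ 0 := by
    intro h; rw [h] at hz₀; simp at hz₀
  have hz0c : z₀ * (starRingEnd ℂ) z₀ = 1 := by
    rw [Complex.mul_conj]
    norm_cast
    simp [Complex.normSq_eq_norm_sq, hz₀]
  have hconj : (starRingEnd ℂ) z₀ = z₀⁻¹ := (inv_eq_of_mul_eq_one_right hz0c).symm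
  have hxy' : x - y ≠ 0 := sub_ne_zero.mpr hxy
  have hxc : x - (starRingEnd ℂ) y ≠ 0 := by
    intro h
    have himm := congrArg Complex.im h
    simp [Complex.sub_im, Complex.conj_im] at himm
    linarith
  have hc : Complex.I * (x - y) ≠ 0 := mul_ne_zero Complex.I_ne_zero hxy'
  have hd : -(Complex.I * (x - (starRingEnd ℂ) y)) ≠ 0 :=
    neg_ne_zero.mpr (mul_ne_zero Complex.I_ne_zero hxc)
  have hgd : HasDerivAt
      (fun t : ℝ => Complex.exp (Complex.I * t * x) - Complex.exp (Complex.I * t * y))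
      (Complex.I * (x - y)) 0 := by
    simpa [mul_sub, Pi.sub_def] using (auxDeriv x).sub (auxDeriv y)
  have hhd : HasDerivAt
      (fun t : ℝ => 1 - Complex.exp (Complex.I * t * (x - (starRingEnd ℂ) y)))
      (-(Complex.I * (x - (starRingEnd ℂ) y))) 0 :=
    (auxDeriv (x - (starRingEnd ℂ) y)).const_sub 1
  obtain ⟨hg1, hg2⟩ := auxSlope hgd (by simp) hc
  obtain ⟨hh1, hh2⟩ := auxSlope hhd (by simp) hd
  have T1 : Tendsto
      (fun t : ℝ => Complex.I * Complex.exp (Complex.I * t * x) *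
        ((t : ℂ) / (Complex.exp (Complex.I * t * x) - Complex.exp (Complex.I * t * y))))
      (nhdsWithin 0 (Set.Ioi 0)) (nhds (Complex.I * (Complex.I * (x - y))⁻¹)) := by
    have hcont : Continuous fun t : ℝ => Complex.I * Complex.exp (Complex.I * t * x) := by
      fun_prop
    have h0 : Tendsto (fun t : ℝ => Complex.I * Complex.exp (Complex.I * t * x))
        (nhdsWithin 0 (Set.Ioi 0)) (nhds Complex.I) := by
      simpa using (hcont.tendsto 0).mono_left nhdsWithin_le_nhds
    exact h0.mul hg1
  have T2 : Tendsto
      (fun t : ℝ => -Complex.I * Complex.exp (Complex.I * t * (x - (starRingEnd ℂ) y)) *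
        ((t : ℂ) / (1 - Complex.exp (Complex.I * t * (x - (starRingEnd ℂ) y)))))
      (nhdsWithin 0 (Set.Ioi 0))
      (nhds (-Complex.I * (-(Complex.I * (x - (starRingEnd ℂ) y)))⁻¹)) := by
    have hcont : Continuous fun t : ℝ =>
        -Complex.I * Complex.exp (Complex.I * t * (x - (starRingEnd ℂ) y)) := by fun_prop
    have h0 : Tendsto (fun t : ℝ =>
        -Complex.I * Complex.exp (Complex.I * t * (x - (starRingEnd ℂ) y)))
        (nhdsWithin 0 (Set.Ioi 0)) (nhds (-Complex.I)) := by
      simpa using (hcont.tendsto 0).mono_left nhdsWithin_le_nhds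
    exact h0.mul hh1
  have T3 : Tendsto
      (fun t : ℝ => -(Complex.I * t * z₀ * Complex.exp (Complex.I * t * x) *
        (starRingEnd ℂ) (z₀ * Complex.exp (Complex.I * t * x))))
      (nhdsWithin 0 (Set.Ioi 0)) (nhds 0) := by
    have hc1 : Continuous fun t : ℝ => (starRingEnd ℂ) (z₀ * Complex.exp (Complex.I * t * x)) :=
      continuous_star.comp (by fun_prop)
    have hcont : Continuous fun t : ℝ => -(Complex.I * t * z₀ * Complex.exp (Complex.I * t * x) *
        (starRingEnd ℂ) (z₀ * Complex.exp (Complex.I * t * x))) :=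
      ((((continuous_const.mul Complex.continuous_ofReal).mul continuous_const).mul
        (by fun_prop)).mul hc1).neg
    simpa using (hcont.tendsto 0).mono_left nhdsWithin_le_nhds
  have Tsum := (T1.add T2).add T3
  have hval : Complex.I * (Complex.I * (x - y))⁻¹ +
      -Complex.I * (-(Complex.I * (x - (starRingEnd ℂ) y)))⁻¹ + 0 =
      1 / (x - y) + 1 / (x - (starRingEnd ℂ) y) := by
    field_simp
    ring
  rw [hval] at Tsum
  refine Tsum.congr' ?_
  filter_upwards [hg2, hh2] with t hG0 hH0
  have hE2 : (starRingEnd ℂ) (Complex.exp (Complex.I * t * y)) =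
      Complex.exp (-(Complex.I * t * (starRingEnd ℂ) y)) := by
    rw [← Complex.exp_conj]
    congr 1
    simp [map_mul, Complex.conj_ofReal, Complex.conj_I]
  have hE1 : (starRingEnd ℂ) (Complex.exp (Complex.I * t * x)) =
      Complex.exp (-(Complex.I * t * (starRingEnd ℂ) x)) := by
    rw [← Complex.exp_conj]
    congr 1
    simp [map_mul, Complex.conj_ofReal, Complex.conj_I]
  have hprod : Complex.exp (Complex.I * t * x) *
      Complex.exp (-(Complex.I * t * (starRingEnd ℂ) y)) =
      Complex.exp (Complex.I * t * (x - (starRingEnd ℂ) y)) := by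
    rw [← Complex.exp_add]
    congr 1
    ring
  have hzG : z₀ * Complex.exp (Complex.I * t * x) - z₀ * Complex.exp (Complex.I * t * y) ≠ 0 := by
    rw [← mul_sub]; exact mul_ne_zero hz0 hG0
  simp only [propA, map_mul, hconj, hE1, hE2]
  have hden : (1 : ℂ) - z₀ * Complex.exp (Complex.I * t * x) *
      (z₀⁻¹ * Complex.exp (-(Complex.I * t * (starRingEnd ℂ) y))) =
      1 - Complex.exp (Complex.I * t * x) *
        Complex.exp (-(Complex.I * t * (starRingEnd ℂ) y)) := by
    field_simp
  rw [hden]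
  rw [← hprod] at hH0 ⊢
  field_simp [hz0, hG0, hH0, hzG]
  ring
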